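/- Let N be a positive integer, D ≤ N a positive integer, ε2 > 0 with 1/ε2 an integer, α ∈ [0,1]^N, and s ∈ {−1,+1}^N. Let i_1,…,i_N be a permutation sorting α so that α_{i_1} ≤ ⋯ ≤ α_{i_N}. For 0 ≤ k < 1/ε2, define q_k ∈ {0,1}^N by q_k(i_j) = 0 if α_{i_j} ≤ k·ε2 and j ≤ D, and q_k(i_j) = 1 otherwise. If Σ_i α_i s_i > N·ε2/2 + (N − D)(1 − ε2/2), then there exists k with 0 ≤ k < 1/ε2 such that Σ_i q_k(i) s_i > N − D. -/

import Mathlib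

/-- Quantization theorem (Theorem 2 of the paper): if the weighted correlation
exceeds `N·ε2/2 + (N−D)(1−ε2/2)`, then one of the at most `1/ε2` erasure
vectors `q_k` has correlation exceeding `N − D`. -/
theorem quantization_theorem {N D : ℕ} (hN : 0 < N) (hD : 0 < D) (hDN : D ≤ N)
    (ε2 : ℝ) (hε2 : 0 < ε2) (K : ℕ) (hK : (K : ℝ) * ε2 = 1)
    (α s : Fin N → ℝ)
    (hα : ∀ i, 0 ≤ α i ∧ α i ≤ 1)
    (hs : ∀ i, s i = 1 ∨ s i = -1)
    (σ : Equiv.Perm (Fin N)) (hσ : Monotone (α ∘ σ))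
    (q : ℕ → Fin N → ℝ)
    (hq : ∀ k, ∀ j : Fin N,
      q k (σ j) = if α (σ j) ≤ (k : ℝ) * ε2 ∧ (j : ℕ) + 1 ≤ D then 0 else 1)
    (hcorr : (N : ℝ) * ε2 / 2 + ((N : ℝ) - D) * (1 - ε2 / 2) < ∑ i, α i * s i) :
    ∃ k, k < K ∧ ((N : ℝ) - D) < ∑ i, q k i * s i := by
  by_contra hcon
  push_neg at hcon
  -- basic facts
  have hK1 : 1 ≤ K := by
    rcases Nat.eq_zero_or_pos K with h | h
    · exfalso; rw [h] at hK; norm_num at hK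
    · exact h
  have hKR : (1:ℝ) ≤ (K:ℝ) := by exact_mod_cast hK1
  have hε2le1 : ε2 ≤ 1 := by nlinarith
  set t : Fin N → ℝ := fun j => s (σ j) with ht_def
  set β : Fin N → ℝ := fun j => α (σ j) with hβ_def
  have ht : ∀ j, t j = 1 ∨ t j = -1 := fun j => hs (σ j)
  have hβ0 : ∀ j, 0 ≤ β j := fun j => (hα (σ j)).1
  have hβ1 : ∀ j, β j ≤ 1 := fun j => (hα (σ j)).2
  set γ : Fin N → ℕ := fun j => ⌈β j / ε2⌉₊ with hγ_def
  have hγK : ∀ j, γ j ≤ K := by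
    intro j
    apply Nat.ceil_le.mpr
    rw [div_le_iff₀ hε2]
    rw [mul_comm] at hK ⊢
    rw [hK]; exact hβ1 j
  have hiff : ∀ (j : Fin N) (k : ℕ), (β j ≤ (k:ℝ) * ε2 ↔ γ j ≤ k) := by
    intro j k
    rw [hγ_def]
    rw [Nat.ceil_le, div_le_iff₀ hε2, mul_comm]
  -- sets
  set S1 : Finset (Fin N) := Finset.univ.filter (fun j : Fin N => (j:ℕ) < D) with hS1_def
  set S2 : Finset (Fin N) := Finset.univ.filter (fun j : Fin N => ¬ (j:ℕ) < D) with hS2_def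
  have hcardS1 : S1.card = D := by
    rw [hS1_def, Finset.card_filter,
      Fin.sum_univ_eq_sum_range (fun i => if i < D then 1 else 0), ← Finset.card_filter,
      show (Finset.range N).filter (fun i => i < D) = Finset.range D by
        ext k; simp only [Finset.mem_filter, Finset.mem_range]; omega]
    exact Finset.card_range D
  have hcardS2 : (S2.card : ℝ) = (N:ℝ) - D := by
    have := Finset.card_filter_add_card_filter_not
      (s := (Finset.univ : Finset (Fin N))) (fun j : Fin N => (j:ℕ) < D)
    rw [Finset.card_univ, Fintype.card_fin, ← hS1_def, ← hS2_def, hcardS1] at this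
    have h2 : S2.card = N - D := by omega
    rw [h2, Nat.cast_sub hDN]
  -- negative-part function
  set np : Fin N → ℝ := fun j => (1 - t j) / 2 with hnp_def
  have hnp01 : ∀ j, np j = 0 ∨ np j = 1 := by
    intro j; rcases ht j with h | h <;> [left; right] <;> rw [hnp_def] <;> simp [h] <;> norm_num
  have hnp0 : ∀ j, 0 ≤ np j := by
    intro j; rcases hnp01 j with h | h <;> rw [h] <;> norm_num
  set M : ℝ := ∑ j ∈ S2, np j with hM_def
  have hM0 : 0 ≤ M := Finset.sum_nonneg fun j _ => hnp0 j
  have hT2 : ∑ j ∈ S2, t j = ((N:ℝ) - D) - 2 * M := by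
    have : ∀ j ∈ S2, t j = 1 - 2 * np j := by intro j _; rw [hnp_def]; ring
    rw [Finset.sum_congr rfl this, Finset.sum_sub_distrib, Finset.sum_const, ← Finset.mul_sum,
      ← hM_def, nsmul_eq_mul, mul_one, hcardS2]
  -- the threshold counts
  set u : ℕ → ℝ := fun k => ∑ j ∈ S1, if k < γ j then t j else 0 with hu_def
  have hcon' : ∀ k, k < K → u k + ∑ j ∈ S2, t j ≤ (N:ℝ) - D := by
    intro k hk
    have h0 := hcon k hk
    rw [← Equiv.sum_comp σ (fun i => q k i * s i)] at h0
    have h1 : ∀ j ∈ Finset.univ, q k (σ j) * s (σ j)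
        = (if γ j ≤ k ∧ (j:ℕ) < D then (0:ℝ) else 1) * t j := by
      intro j _
      rw [hq k j]
      have : (α (σ j) ≤ (k:ℝ) * ε2 ∧ (j:ℕ) + 1 ≤ D) ↔ (γ j ≤ k ∧ (j:ℕ) < D) := by
        constructor
        · rintro ⟨h1, h2⟩; exact ⟨(hiff j k).mp h1, by omega⟩
        · rintro ⟨h1, h2⟩; exact ⟨(hiff j k).mpr h1, by omega⟩
      simp only [this]; rfl
    rw [Finset.sum_congr rfl h1,
      ← Finset.sum_filter_add_sum_filter_not Finset.univ (fun j : Fin N => (j:ℕ) < D)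
        (fun j => (if γ j ≤ k ∧ (j:ℕ) < D then (0:ℝ) else 1) * t j), ← hS1_def, ← hS2_def] at h0
    have h2 : ∀ j ∈ S1, (if γ j ≤ k ∧ (j:ℕ) < D then (0:ℝ) else 1) * t j
        = if k < γ j then t j else 0 := by
      intro j hj
      rw [hS1_def] at hj
      simp only [Finset.mem_filter] at hj
      by_cases hc : γ j ≤ k
      · rw [if_pos ⟨hc, hj.2⟩, if_neg (by omega), zero_mul]
      · rw [if_neg (by tauto), if_pos (by omega), one_mul]
    have h3 : ∀ j ∈ S2, (if γ j ≤ k ∧ (j:ℕ) < D then (0:ℝ) else 1) * t j = t j := by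
      intro j hj
      rw [hS2_def] at hj
      simp only [Finset.mem_filter] at hj
      rw [if_neg (by tauto), one_mul]
    rw [Finset.sum_congr rfl h2, Finset.sum_congr rfl h3] at h0
    exact h0
  have huM : ∀ k, k < K → u k ≤ 2 * M := by
    intro k hk
    have := hcon' k hk
    rw [hT2] at this
    linarith
  -- double counting
  have hγsum : ∑ j ∈ S1, (γ j : ℝ) * t j = ∑ k ∈ Finset.range K, u k := by
    rw [hu_def]
    rw [Finset.sum_comm]
    apply Finset.sum_congr rfl
    intro j _
    rw [← Finset.sum_filter,
      show (Finset.range K).filter (fun k => k < γ j) = Finset.range (γ j) by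
        ext k; simp only [Finset.mem_filter, Finset.mem_range]
        have := hγK j; omega,
      Finset.sum_const, nsmul_eq_mul, Finset.card_range]
  have hrange : ∑ k ∈ Finset.range K, u k = u 0 + ∑ k ∈ Finset.Ico 1 K, u k := by
    rw [Finset.range_eq_Ico, Finset.sum_eq_sum_Ico_succ_bot (by omega) u]
  -- the top level
  set G : ℕ := max (S1.sup γ) 1 with hG_def
  have hG1 : 1 ≤ G := le_max_right _ 1
  have hGK : G ≤ K := by
    apply max_le _ hK1
    apply Finset.sup_le
    intro j _; exact hγK j
  have hγG : ∀ j ∈ S1, γ j ≤ G := by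
    intro j hj
    exact le_trans (Finset.le_sup hj) (le_max_left _ _)
  have huIco : ∑ k ∈ Finset.Ico 1 K, u k ≤ 2 * M * ((G:ℝ) - 1) := by
    have hpt : ∀ k ∈ Finset.Ico 1 K, u k ≤ if k < G then 2 * M else 0 := by
      intro k hk
      simp only [Finset.mem_Ico] at hk
      by_cases hc : k < G
      · rw [if_pos hc]; exact huM k hk.2
      · rw [if_neg hc]
        have : u k = ∑ j ∈ S1, (0:ℝ) := by
          apply Finset.sum_congr rfl
          intro j hj
          rw [if_neg (by have := hγG j hj; omega)]
        rw [this, Finset.sum_const, smul_zero]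
    calc ∑ k ∈ Finset.Ico 1 K, u k ≤ ∑ k ∈ Finset.Ico 1 K, (if k < G then 2 * M else 0) :=
          Finset.sum_le_sum hpt
      _ = 2 * M * ((G:ℝ) - 1) := by
          rw [← Finset.sum_filter,
            show (Finset.Ico 1 K).filter (fun k => k < G) = Finset.Ico 1 G by
              ext k; simp only [Finset.mem_filter, Finset.mem_Ico]; omega,
            Finset.sum_const, Nat.card_Ico, nsmul_eq_mul]
          rw [Nat.cast_sub hG1, Nat.cast_one]
          ring
  -- indicator of γ ≥ 1
  set ind : Fin N → ℝ := fun j => if 1 ≤ γ j then 1 else 0 with hind_def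
  set C0 : ℝ := ∑ j ∈ S1, ind j with hC0_def
  set N0 : ℝ := ∑ j ∈ S1, np j * ind j with hN0_def
  have hu0 : u 0 = C0 - 2 * N0 := by
    simp only [hu_def, hC0_def, hN0_def, Finset.mul_sum]
    rw [← Finset.sum_sub_distrib]
    apply Finset.sum_congr rfl
    intro j _
    by_cases hc : 1 ≤ γ j
    · rw [if_pos (show 0 < γ j by omega)]
      simp only [hind_def, if_pos hc, hnp_def]
      ring
    · rw [if_neg (show ¬ 0 < γ j by omega)]
      simp only [hind_def, if_neg hc]
      ring
  have hC0D : C0 ≤ (D:ℝ) := by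
    rw [hC0_def]
    calc ∑ j ∈ S1, ind j ≤ ∑ j ∈ S1, (1:ℝ) := by
          apply Finset.sum_le_sum
          intro j _
          rw [hind_def]
          by_cases hc : 1 ≤ γ j <;> simp [hc]
      _ = (D:ℝ) := by rw [Finset.sum_const, hcardS1, nsmul_eq_mul, mul_one]
  have hN00 : 0 ≤ N0 := by
    apply Finset.sum_nonneg
    intro j _
    apply mul_nonneg (hnp0 j)
    rw [hind_def]
    by_cases hc : 1 ≤ γ j <;> simp [hc]
  -- per-coordinate bound on S1
  have hβ_eq_zero : ∀ j, γ j = 0 → β j = 0 := by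
    intro j h0
    simp only [hγ_def] at h0
    have h1 : β j / ε2 ≤ 0 := by
      have := Nat.ceil_eq_zero.mp h0
      exact this
    have h2 : β j ≤ 0 := by
      rw [div_nonpos_iff] at h1
      rcases h1 with ⟨h, _⟩ | ⟨_, h⟩
      · linarith [hβ0 j]
      · linarith
    linarith [hβ0 j]
  have hS1bound : ∑ j ∈ S1, β j * t j
      ≤ ε2 * ∑ j ∈ S1, ((γ j : ℝ) * t j) + ε2 * N0 := by
    rw [hN0_def, Finset.mul_sum, Finset.mul_sum, ← Finset.sum_add_distrib]
    apply Finset.sum_le_sum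
    intro j _
    have hceil : β j / ε2 ≤ (γ j : ℝ) := Nat.le_ceil _
    have h1 : β j ≤ ε2 * γ j := by
      rw [div_le_iff₀ hε2] at hceil; linarith
    rcases ht j with h | h
    · have hnpj : np j = 0 := by simp only [hnp_def]; rw [h]; norm_num
      rw [h, hnpj]
      simp only [mul_one, zero_mul, mul_zero]
      linarith
    · have hnpj : np j = 1 := by simp only [hnp_def]; rw [h]; norm_num
      rw [h, hnpj]
      by_cases hc : 1 ≤ γ j
      · simp only [hind_def, if_pos hc, mul_one, one_mul]
        have hceil2 : (γ j : ℝ) < β j / ε2 + 1 := by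
          simp only [hγ_def]
          exact Nat.ceil_lt_add_one (div_nonneg (hβ0 j) hε2.le)
        have h2 : ((γ j:ℝ) - 1) * ε2 < β j :=
          (lt_div_iff₀ hε2).mp (by linarith)
        nlinarith
      · have hγ0 : γ j = 0 := by omega
        have hβj : β j = 0 := hβ_eq_zero j hγ0
        simp only [hind_def, if_neg hc, mul_zero, hγ0, Nat.cast_zero, zero_mul]
        rw [hβj]; norm_num
  -- per-coordinate bound on S2
  have hS2bound : ∑ j ∈ S2, β j * t j
      ≤ ((N:ℝ) - D) - 2 * M + (M - ∑ j ∈ S2, β j * np j) := by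
    have hpt : ∀ j ∈ S2, β j * t j ≤ t j + (1 - β j) * np j := by
      intro j _
      rcases ht j with h | h
      · have hnpj : np j = 0 := by simp only [hnp_def]; rw [h]; norm_num
        rw [h, hnpj]
        simp only [mul_one, mul_zero]
        linarith [hβ1 j]
      · have hnpj : np j = 1 := by simp only [hnp_def]; rw [h]; norm_num
        rw [h, hnpj]
        ring_nf
        linarith [le_refl (β j)]
    calc ∑ j ∈ S2, β j * t j ≤ ∑ j ∈ S2, (t j + (1 - β j) * np j) := Finset.sum_le_sum hpt
      _ = ((N:ℝ) - D) - 2 * M + (M - ∑ j ∈ S2, β j * np j) := by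
          rw [Finset.sum_add_distrib, hT2]
          have : ∀ j ∈ S2, (1 - β j) * np j = np j - β j * np j := by intro j _; ring
          rw [Finset.sum_congr rfl this, Finset.sum_sub_distrib, ← hM_def]
  -- sortedness: large coordinates dominate (G-1)ε2
  have hSβN : M * ((G:ℝ) - 1) * ε2 ≤ ∑ j ∈ S2, β j * np j := by
    rcases Nat.eq_zero_or_pos (S1.sup γ) with h0 | hpos
    · have : G = 1 := by rw [hG_def, h0]; simp
      rw [this]
      simp only [Nat.cast_one, sub_self, mul_zero, zero_mul]
      apply Finset.sum_nonneg
      intro j _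
      exact mul_nonneg (hβ0 j) (hnp0 j)
    · have hGsup : G = S1.sup γ := by rw [hG_def]; omega
      have hS1ne : S1.Nonempty := by
        refine ⟨⟨0, hN⟩, ?_⟩
        rw [hS1_def]
        simp only [Finset.mem_filter, Finset.mem_univ, true_and]
        exact hD
      obtain ⟨j0, hj0mem, hj0⟩ := Finset.exists_mem_eq_sup S1 hS1ne γ
      have hj0lt : (j0:ℕ) < D := by
        rw [hS1_def] at hj0mem
        simp only [Finset.mem_filter] at hj0mem
        exact hj0mem.2
      have hkey : ((G:ℝ) - 1) * ε2 ≤ β j0 := by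
        have hγj0 : γ j0 = G := by rw [hGsup, hj0]
        have h1 : (G:ℕ) - 1 < γ j0 := by omega
        have h2 : ((G - 1 : ℕ):ℝ) < β j0 / ε2 := by
          simp only [hγ_def] at h1
          exact_mod_cast Nat.lt_ceil.mp h1
        have h3 : ((G - 1:ℕ):ℝ) = (G:ℝ) - 1 := by
          rw [Nat.cast_sub hG1, Nat.cast_one]
        rw [h3] at h2
        exact le_of_lt ((lt_div_iff₀ hε2).mp h2)
      have hpt : ∀ j ∈ S2, ((G:ℝ) - 1) * ε2 * np j ≤ β j * np j := by
        intro j hj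
        apply mul_le_mul_of_nonneg_right _ (hnp0 j)
        have hjD : D ≤ (j:ℕ) := by
          rw [hS2_def] at hj
          simp only [Finset.mem_filter] at hj
          omega
        have hle : j0 ≤ j := by
          rw [Fin.le_def]; omega
        have := hσ (show j0 ≤ j from hle)
        simp only [Function.comp] at this
        calc ((G:ℝ) - 1) * ε2 ≤ β j0 := hkey
          _ ≤ β j := this
      calc M * ((G:ℝ) - 1) * ε2 = ((G:ℝ) - 1) * ε2 * M := by ring
        _ = ∑ j ∈ S2, ((G:ℝ) - 1) * ε2 * np j := by rw [hM_def, Finset.mul_sum]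
        _ ≤ ∑ j ∈ S2, β j * np j := Finset.sum_le_sum hpt
  -- assembly
  have hGKR : (G:ℝ) ≤ (K:ℝ) := by exact_mod_cast hGK
  have b8 : M * (G:ℝ) * ε2 ≤ M := by
    have h1 : (G:ℝ) * ε2 ≤ 1 := by
      rw [← hK]
      exact mul_le_mul_of_nonneg_right hGKR hε2.le
    calc M * (G:ℝ) * ε2 = M * ((G:ℝ) * ε2) := by ring
      _ ≤ M * 1 := mul_le_mul_of_nonneg_left h1 hM0
      _ = M := mul_one M
  have b2 : ε2 * N0 = ε2 * C0 / 2 - ε2 * (u 0) / 2 := by rw [hu0]; ring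
  have b3 : ε2 * u 0 ≤ ε2 * (2 * M) :=
    mul_le_mul_of_nonneg_left (huM 0 (by omega)) hε2.le
  have b4 : ε2 * C0 ≤ ε2 * D := mul_le_mul_of_nonneg_left hC0D hε2.le
  have b5 : ε2 * (∑ k ∈ Finset.Ico 1 K, u k) ≤ ε2 * (2 * M * ((G:ℝ) - 1)) :=
    mul_le_mul_of_nonneg_left huIco hε2.le
  have b1 : ε2 * ∑ j ∈ S1, ((γ j : ℝ) * t j)
      = ε2 * (u 0) + ε2 * (∑ k ∈ Finset.Ico 1 K, u k) := by
    rw [hγsum, hrange]; ring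
  have hsplit : ∑ j ∈ S1, β j * t j + ∑ j ∈ S2, β j * t j = ∑ j, β j * t j := by
    rw [hS1_def, hS2_def]
    exact Finset.sum_filter_add_sum_filter_not Finset.univ _ _
  have hαβ : ∑ j, β j * t j = ∑ i, α i * s i := by
    simp only [hβ_def, ht_def]
    exact Equiv.sum_comp σ (fun i => α i * s i)
  rw [← hαβ, ← hsplit] at hcorr
  linarith [hS1bound, hS2bound, hSβN, b1, b2, b3, b4, b5, b8, hcorr]
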